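/- Fix r ∈ (0,1). For each n ≥ 1 let θ*_n denote the unique zero in [(2n−1)π/(2n), π) of the strictly decreasing function f_n(θ) = cot(nθ) + ((1−r)/(1+r))·cot(θ/2). Then for all sufficiently large n, (2n−1)π/(2n) ≤ θ*_n ≤ 2nπ/(2n+1), and n·cot(θ*_n/2) → π/4 as n → ∞ (equivalently, cot(θ*_n/2) ~ π/(4n)). -/

import Mathlib

open Real Filter Set

/-- The function `f_n(θ) = cot(nθ) + ((1-r)/(1+r))·cot(θ/2)`. -/
noncomputable def fcot (n : ℕ) (r : ℝ) (θ : ℝ) : ℝ :=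
  Real.cot (n * θ) + ((1 - r) / (1 + r)) * Real.cot (θ / 2)

lemma cot_eq_inv_tan' (x : ℝ) : Real.cot x = (Real.tan x)⁻¹ := by
  rw [Real.cot_eq_cos_div_sin, Real.tan_eq_sin_div_cos, inv_div]

lemma cot_eq_tan_pi_div_two_sub' (x : ℝ) : Real.cot x = Real.tan (π / 2 - x) := by
  rw [Real.tan_pi_div_two_sub, cot_eq_inv_tan']

lemma cot_nat_pi_sub' (n : ℕ) (v : ℝ) : Real.cot ((n : ℝ) * π - v) = -Real.cot v := by
  rw [cot_eq_inv_tan', cot_eq_inv_tan', Real.tan_nat_mul_pi_sub, inv_neg]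

/-- tan x / x → 1 as x → 0 (within x ≠ 0). -/
lemma tendsto_tan_div_self' :
    Tendsto (fun x : ℝ => Real.tan x / x) (nhdsWithin 0 {0}ᶜ) (nhds 1) := by
  have h : HasDerivAt Real.tan 1 0 := by
    have := Real.hasDerivAt_tan (x := 0) (by simp)
    simpa using this
  have h2 := hasDerivAt_iff_tendsto_slope.mp h
  refine h2.congr' ?_
  filter_upwards [self_mem_nhdsWithin] with x hx
  simp [slope_fun_def, Real.tan_zero, div_eq_inv_mul]

lemma aux_tendsto' (x : ℕ → ℝ) (hpos : ∀ᶠ n in atTop, 0 < x n)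
    (hx : Tendsto x atTop (nhds 0)) (L : ℝ)
    (hL : Tendsto (fun n : ℕ => (n : ℝ) * x n) atTop (nhds L)) :
    Tendsto (fun n : ℕ => (n : ℝ) * Real.tan (x n)) atTop (nhds L) := by
  have hx' : Tendsto x atTop (nhdsWithin 0 {0}ᶜ) := by
    refine tendsto_nhdsWithin_iff.mpr ⟨hx, ?_⟩
    filter_upwards [hpos] with n hn; exact ne_of_gt hn
  have h1 : Tendsto (fun n : ℕ => Real.tan (x n) / x n) atTop (nhds 1) :=
    tendsto_tan_div_self'.comp hx'
  have h2 : Tendsto (fun n : ℕ => (Real.tan (x n) / x n) * ((n : ℝ) * x n)) atTop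
      (nhds (1 * L)) := h1.mul hL
  rw [one_mul] at h2
  refine h2.congr' ?_
  filter_upwards [hpos] with n hn
  field_simp

lemma tendsto_n_tan_pi_div' (a b : ℝ) (ha : 0 < a) :
    Tendsto (fun n : ℕ => (n : ℝ) * Real.tan (π / (a * n + b))) atTop (nhds (π / a)) := by
  have hden : Tendsto (fun n : ℕ => a * (n : ℝ) + b) atTop atTop :=
    tendsto_atTop_add_const_right atTop b (tendsto_natCast_atTop_atTop.const_mul_atTop ha)
  apply aux_tendsto'
  · filter_upwards [hden.eventually_gt_atTop 0] with n hn
    exact div_pos Real.pi_pos hn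
  · exact Tendsto.div_atTop tendsto_const_nhds hden
  · have h1 : Tendsto (fun n : ℕ => a + b / n) atTop (nhds a) := by
      have hb : Tendsto (fun n : ℕ => b / (n : ℝ)) atTop (nhds 0) :=
        Tendsto.div_atTop tendsto_const_nhds tendsto_natCast_atTop_atTop
      simpa using (tendsto_const_nhds (x := a) (f := atTop)).add hb
    have h2 : Tendsto (fun n : ℕ => π / (a + b / n)) atTop (nhds (π / a)) :=
      tendsto_const_nhds.div h1 (ne_of_gt ha)
    refine h2.congr' ?_
    filter_upwards [eventually_gt_atTop 0, hden.eventually_gt_atTop 0] with n hn hd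
    have hn' : (0 : ℝ) < n := by exact_mod_cast hn
    have h3 : a + b / n = (a * n + b) / n := by field_simp
    rw [h3, div_div_eq_mul_div, mul_comm (π : ℝ) (n : ℝ), mul_div_assoc]

/-- Key upper bound for a zero of `fcot`. -/
lemma theta_upper (n : ℕ) (hn : 1 ≤ n) (c : ℝ) (hc0 : 0 < c) (th : ℝ)
    (h1 : (2 * n - 1) * π / (2 * n) ≤ th) (h2 : th < π)
    (heq : Real.cot ((n : ℝ) * th) + c * Real.cot (th / 2) = 0)
    (hkey : c * Real.tan (π / (4 * n)) < Real.tan (π / (4 * n + 2))) :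
    th ≤ 2 * n * π / (2 * n + 1) := by
  have hm : (1 : ℝ) ≤ (n : ℝ) := by exact_mod_cast hn
  set m : ℝ := (n : ℝ) with hmdef
  have hpi := Real.pi_pos
  set u : ℝ := π / 2 - th / 2 with hu
  have hu0 : 0 < u := by rw [hu]; linarith
  have hun : u ≤ π / (4 * m) := by
    have hval : (2 * m - 1) * π / (2 * m) / 2 = π / 2 - π / (4 * m) := by
      field_simp; ring
    have : (2 * m - 1) * π / (2 * m) / 2 ≤ th / 2 := by linarith
    rw [hval] at this; rw [hu]; linarith
  have hth0 : 0 < th := by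
    have : 0 < (2 * m - 1) * π / (2 * m) :=
      div_pos (mul_pos (by linarith) hpi) (by linarith)
    linarith
  have hu_half : u < π / 2 := by rw [hu]; linarith
  -- rewrite the equation
  have hhalf : Real.cot (th / 2) = Real.tan u := by
    rw [cot_eq_tan_pi_div_two_sub']
  have hnth : (m : ℝ) * th = (n : ℝ) * π - 2 * m * u := by
    rw [hu]; ring
  have hcotv : Real.cot (m * th) = -Real.cot (2 * m * u) := by
    rw [hnth, cot_nat_pi_sub']
  have heq' : Real.cot (2 * m * u) = c * Real.tan u := by
    rw [hcotv, hhalf] at heq; linarith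
  -- by contradiction
  by_contra hcon
  push_neg at hcon
  have hu_small : u < π / (4 * m + 2) := by
    have hval : 2 * m * π / (2 * m + 1) / 2 = π / 2 - π / (4 * m + 2) := by
      field_simp; ring
    have : 2 * m * π / (2 * m + 1) / 2 < th / 2 := by
      have := hcon; linarith
    rw [hval] at this; rw [hu]; linarith
  set v : ℝ := 2 * m * u with hv
  have hv0 : 0 < v := by positivity
  have hp1 : (0 : ℝ) < π / (4 * m + 2) := by positivity
  have hlt2 : v < 2 * m * (π / (4 * m + 2)) :=
    mul_lt_mul_of_pos_left hu_small (by linarith)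
  have h5 : 2 * m * (π / (4 * m + 2)) = π / 2 - π / (4 * m + 2) := by
    field_simp; ring
  have hvlt : v < π / 2 := by linarith
  have hw : π / (4 * m + 2) < π / 2 - v := by linarith
  -- tan (π/(4m+2)) < tan (π/2 - v) = cot v
  have ht1 : Real.tan (π / (4 * m + 2)) < Real.tan (π / 2 - v) :=
    Real.tan_lt_tan_of_lt_of_lt_pi_div_two (by linarith) (by linarith) hw
  have hcv : Real.cot v = Real.tan (π / 2 - v) := cot_eq_tan_pi_div_two_sub' v
  -- cot v = c * tan u ≤ c * tan (π/(4m))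
  have hu_lt : u < π / (4 * m) := by
    have : π / (4 * m + 2) ≤ π / (4 * m) := by
      apply div_le_div_of_nonneg_left (le_of_lt hpi) (by linarith) (by linarith)
    linarith
  have hm4 : π / (4 * m) < π / 2 :=
    div_lt_div_of_pos_left hpi (by norm_num) (by linarith)
  have ht2 : Real.tan u < Real.tan (π / (4 * m)) :=
    Real.tan_lt_tan_of_lt_of_lt_pi_div_two (by linarith) hm4 hu_lt
  have : Real.cot v ≤ c * Real.tan (π / (4 * m)) := by
    rw [heq']
    exact mul_le_mul_of_nonneg_left (le_of_lt ht2) (le_of_lt hc0)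
  rw [hcv] at this
  linarith

theorem stmt13 (r : ℝ) (hr : r ∈ Set.Ioo (0 : ℝ) 1) (θ : ℕ → ℝ)
    (hθ : ∀ n : ℕ, 1 ≤ n →
      θ n ∈ Set.Ico ((2 * n - 1) * Real.pi / (2 * n)) Real.pi ∧ fcot n r (θ n) = 0) :
    (∃ N : ℕ, ∀ n ≥ N,
      (2 * n - 1) * Real.pi / (2 * n) ≤ θ n ∧ θ n ≤ 2 * n * Real.pi / (2 * n + 1)) ∧
      Filter.Tendsto (fun n : ℕ => n * Real.cot (θ n / 2)) Filter.atTop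
        (nhds (Real.pi / 4)) := by
  obtain ⟨hr0, hr1⟩ := hr
  have hpi := Real.pi_pos
  set c : ℝ := (1 - r) / (1 + r) with hc
  have hc0 : 0 < c := div_pos (by linarith) (by linarith)
  have hc1 : c < 1 := (div_lt_one (by linarith)).mpr (by linarith)
  -- the two comparison sequences
  have l1 : Tendsto (fun n : ℕ => (n : ℝ) * Real.tan (π / (4 * n))) atTop (nhds (π / 4)) := by
    have := tendsto_n_tan_pi_div' 4 0 (by norm_num)
    simpa using this
  have l2 : Tendsto (fun n : ℕ => (n : ℝ) * Real.tan (π / (4 * n + 2))) atTop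
      (nhds (π / 4)) := tendsto_n_tan_pi_div' 4 2 (by norm_num)
  have l1' : Tendsto (fun n : ℕ => c * ((n : ℝ) * Real.tan (π / (4 * n)))) atTop
      (nhds (c * (π / 4))) := tendsto_const_nhds.mul l1
  have hlt : c * (π / 4) < π / 4 := by nlinarith
  have key : ∀ᶠ n : ℕ in atTop,
      c * ((n : ℝ) * Real.tan (π / (4 * n))) < (n : ℝ) * Real.tan (π / (4 * n + 2)) :=
    l1'.eventually_lt l2 hlt
  obtain ⟨N, hN⟩ := eventually_atTop.mp (key.and (eventually_ge_atTop 1))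
  -- pointwise key inequality (divided by n)
  have hkey : ∀ n ≥ N, c * Real.tan (π / (4 * n)) < Real.tan (π / (4 * n + 2)) := by
    intro n hn
    obtain ⟨h1, h2⟩ := hN n hn
    have hn0 : (0 : ℝ) < n := by exact_mod_cast h2
    have h1' : (n : ℝ) * (c * Real.tan (π / (4 * n))) < (n : ℝ) * Real.tan (π / (4 * n + 2)) := by
      nlinarith [h1]
    exact lt_of_mul_lt_mul_left h1' (le_of_lt hn0)
  -- the bounds for n ≥ N
  have hbound : ∀ n ≥ N, (2 * n - 1) * π / (2 * n) ≤ θ n ∧ θ n ≤ 2 * n * π / (2 * n + 1) := by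
    intro n hn
    have hn1 : 1 ≤ n := (hN n hn).2
    obtain ⟨⟨hlo, hhi⟩, heq⟩ := hθ n hn1
    refine ⟨hlo, ?_⟩
    exact theta_upper n hn1 c hc0 (θ n) hlo hhi (by simpa [fcot, hc] using heq) (hkey n hn)
  refine ⟨⟨N, hbound⟩, ?_⟩
  -- the limit, by squeezing
  apply tendsto_of_tendsto_of_tendsto_of_le_of_le' l2 l1
  · -- lower bound
    filter_upwards [eventually_ge_atTop N] with n hn
    have hn1 : 1 ≤ n := (hN n hn).2
    have hm : (1 : ℝ) ≤ (n : ℝ) := by exact_mod_cast hn1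
    obtain ⟨⟨hlo, hhi⟩, _⟩ := hθ n hn1
    have hup := (hbound n hn).2
    -- cot (θ n / 2) = tan (π/2 - θ n / 2) ≥ tan (π/(4n+2))
    have hu1 : π / (4 * (n : ℝ) + 2) ≤ π / 2 - θ n / 2 := by
      have hval : 2 * (n : ℝ) * π / (2 * n + 1) / 2 = π / 2 - π / (4 * n + 2) := by
        field_simp; ring
      linarith [hup, hval]
    have hth0 : 0 < θ n := by
      have : 0 < (2 * (n : ℝ) - 1) * π / (2 * n) :=
        div_pos (mul_pos (by linarith) hpi) (by linarith)
      linarith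
    have hu2 : π / 2 - θ n / 2 < π / 2 := by linarith
    have htan : Real.tan (π / (4 * (n : ℝ) + 2)) ≤ Real.tan (π / 2 - θ n / 2) := by
      rcases eq_or_lt_of_le hu1 with h | h
      · rw [h]
      · refine le_of_lt (Real.tan_lt_tan_of_lt_of_lt_pi_div_two ?_ hu2 h)
        have : (0 : ℝ) < π / (4 * (n : ℝ) + 2) := by positivity
        linarith
    have hcv : Real.cot (θ n / 2) = Real.tan (π / 2 - θ n / 2) :=
      cot_eq_tan_pi_div_two_sub' _
    rw [hcv]
    exact mul_le_mul_of_nonneg_left htan (by positivity)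
  · -- upper bound
    filter_upwards [eventually_ge_atTop N] with n hn
    have hn1 : 1 ≤ n := (hN n hn).2
    have hm : (1 : ℝ) ≤ (n : ℝ) := by exact_mod_cast hn1
    obtain ⟨⟨hlo, hhi⟩, _⟩ := hθ n hn1
    have hu1 : π / 2 - θ n / 2 ≤ π / (4 * (n : ℝ)) := by
      have hval : (2 * (n : ℝ) - 1) * π / (2 * n) / 2 = π / 2 - π / (4 * n) := by
        field_simp; ring
      linarith [hlo, hval]
    have hm4 : π / (4 * (n : ℝ)) < π / 2 :=
      div_lt_div_of_pos_left hpi (by norm_num) (by linarith)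
    have htan : Real.tan (π / 2 - θ n / 2) ≤ Real.tan (π / (4 * (n : ℝ))) := by
      rcases eq_or_lt_of_le hu1 with h | h
      · rw [h]
      · exact le_of_lt (Real.tan_lt_tan_of_lt_of_lt_pi_div_two (by linarith) hm4 h)
    have hcv : Real.cot (θ n / 2) = Real.tan (π / 2 - θ n / 2) :=
      cot_eq_tan_pi_div_two_sub' _
    rw [hcv]
    exact mul_le_mul_of_nonneg_left htan (by positivity)
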